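/- For the clipped linear sigmoid α of Proposition 1, for fixed Δ ∈ ℝ, β = 1, ε ∈ [0,1/2), one has the expansion α(Δ, s, 1, ε) = (1−2ε)√(2/π) e^{−Δ²/2}(1 + (Δ²−1)/(24 s²) + O(1/s⁴)) as s → ∞; in particular α(Δ, s, 1, ε) → (1−2ε)√(2/π) e^{−Δ²/2} as s → ∞. -/

import Mathlib

open Real Filter

/-- The error function `erf x = (2/√π) ∫₀ˣ e^{-t²} dt`. -/
noncomputable def erf (x : ℝ) : ℝ := (2 / Real.sqrt π) * ∫ t in (0:ℝ)..x, Real.exp (-t ^ 2)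

noncomputable def g0 (x : ℝ) : ℝ := erf (x / Real.sqrt 2)
noncomputable def g1 (x : ℝ) : ℝ := Real.sqrt (2/π) * Real.exp (-x^2/2)
noncomputable def g2 (x : ℝ) : ℝ := Real.sqrt (2/π) * -x * Real.exp (-x^2/2)
noncomputable def g3 (x : ℝ) : ℝ := Real.sqrt (2/π) * (x^2 - 1) * Real.exp (-x^2/2)
noncomputable def g4 (x : ℝ) : ℝ := Real.sqrt (2/π) * (3*x - x^3) * Real.exp (-x^2/2)
noncomputable def g5 (x : ℝ) : ℝ := Real.sqrt (2/π) * (x^4 - 6*x^2 + 3) * Real.exp (-x^2/2)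

lemma gauss_deriv {p : ℝ → ℝ} {pd x : ℝ} (hp : HasDerivAt p pd x) :
    HasDerivAt (fun y => p y * Real.exp (-y^2/2)) ((pd - x * p x) * Real.exp (-x^2/2)) x := by
  have hq : HasDerivAt (fun y : ℝ => -y^2/2) (-x) x := by
    have h := ((hasDerivAt_pow 2 x).neg).div_const 2
    refine h.congr_deriv ?_
    push_cast
    ring
  have hE := hq.exp
  have h := hp.mul hE
  refine h.congr_deriv ?_
  ring

lemma hd1 (x : ℝ) : HasDerivAt g1 (g2 x) x := by
  have h := gauss_deriv (hasDerivAt_const x (Real.sqrt (2/π)))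
  have hval : g2 x = (0 - x * Real.sqrt (2/π)) * Real.exp (-x^2/2) := by unfold g2; ring
  rw [hval]; exact h

lemma hd2 (x : ℝ) : HasDerivAt g2 (g3 x) x := by
  have hp : HasDerivAt (fun y : ℝ => Real.sqrt (2/π) * -y) (Real.sqrt (2/π) * -1) x :=
    ((hasDerivAt_id x).neg).const_mul _
  have h := gauss_deriv hp
  have hval : g3 x = (Real.sqrt (2/π) * -1 - x * (Real.sqrt (2/π) * -x)) * Real.exp (-x^2/2) := by
    unfold g3; ring
  rw [hval]; exact h

lemma hd3 (x : ℝ) : HasDerivAt g3 (g4 x) x := by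
  have hp : HasDerivAt (fun y : ℝ => Real.sqrt (2/π) * (y^2 - 1))
      (Real.sqrt (2/π) * (2 * x)) x := by
    have h := ((hasDerivAt_pow 2 x).sub_const 1).const_mul (Real.sqrt (2/π))
    refine h.congr_deriv ?_
    push_cast
    ring
  have h := gauss_deriv hp
  have hval : g4 x = (Real.sqrt (2/π) * (2*x) - x * (Real.sqrt (2/π) * (x^2-1))) *
      Real.exp (-x^2/2) := by unfold g4; ring
  rw [hval]; exact h

lemma hd4 (x : ℝ) : HasDerivAt g4 (g5 x) x := by
  have hp : HasDerivAt (fun y : ℝ => Real.sqrt (2/π) * (3*y - y^3))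
      (Real.sqrt (2/π) * (3 - 3*x^2)) x := by
    have h := (((hasDerivAt_id x).const_mul (3:ℝ)).sub (hasDerivAt_pow 3 x)).const_mul
      (Real.sqrt (2/π))
    refine h.congr_deriv ?_
    push_cast
    ring
  have h := gauss_deriv hp
  have hval : g5 x = (Real.sqrt (2/π) * (3 - 3*x^2) - x * (Real.sqrt (2/π) * (3*x - x^3))) *
      Real.exp (-x^2/2) := by unfold g5; ring
  rw [hval]; exact h

lemma hd0 (x : ℝ) : HasDerivAt g0 (g1 x) x := by
  have hcont : Continuous (fun t : ℝ => Real.exp (-t^2)) := by continuity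
  have hI : HasDerivAt (fun u : ℝ => ∫ t in (0:ℝ)..u, Real.exp (-t^2))
      (Real.exp (-(x / Real.sqrt 2)^2)) (x / Real.sqrt 2) :=
    (hcont.integral_hasStrictDerivAt 0 _).hasDerivAt
  have h2 := hI.const_mul (2 / Real.sqrt π)
  have h3 : HasDerivAt (fun y : ℝ => y / Real.sqrt 2) (1 / Real.sqrt 2) x := by
    simpa using (hasDerivAt_id x).div_const (Real.sqrt 2)
  have h4 := h2.comp x h3
  have hs2 : Real.sqrt 2 * Real.sqrt 2 = 2 := Real.mul_self_sqrt (by norm_num)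
  have hs2pos : (0:ℝ) < Real.sqrt 2 := by positivity
  have hπpos : (0:ℝ) < Real.sqrt π := Real.sqrt_pos.mpr Real.pi_pos
  have hsq : (x / Real.sqrt 2)^2 = x^2/2 := by
    rw [div_pow]
    congr 1
    rw [Real.sq_sqrt]; norm_num
  have hk : Real.sqrt (2/π) = Real.sqrt 2 / Real.sqrt π := Real.sqrt_div (by norm_num) π
  have hc : 2 / Real.sqrt π * (1 / Real.sqrt 2) = Real.sqrt 2 / Real.sqrt π := by
    field_simp
    nlinarith [hs2]
  have hval : g1 x = 2 / Real.sqrt π * Real.exp (-(x / Real.sqrt 2)^2) * (1 / Real.sqrt 2) := by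
    unfold g1
    rw [hsq, hk, ← hc]
    ring
  rw [hval]; exact h4

lemma comp_add {f : ℝ → ℝ} {d : ℝ} (Δ t : ℝ) (hf : HasDerivAt f d (Δ + t)) :
    HasDerivAt (fun u => f (Δ + u)) d t := by
  exact (hf.comp t ((hasDerivAt_const t Δ).add (hasDerivAt_id t))).congr_deriv (by simp)

lemma comp_sub {f : ℝ → ℝ} {d : ℝ} (Δ t : ℝ) (hf : HasDerivAt f d (Δ - t)) :
    HasDerivAt (fun u => f (Δ - u)) (-d) t := by
  exact (hf.comp t ((hasDerivAt_const t Δ).sub (hasDerivAt_id t))).congr_deriv (by simp)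

lemma gauss_poly_bound (x : ℝ) : |(x^4 - 6*x^2 + 3) * Real.exp (-x^2/2)| ≤ 31 := by
  have he0 : 0 < Real.exp (-x^2/2) := Real.exp_pos _
  have hu : 1 + x^2/4 ≤ Real.exp (x^2/4) := by
    have := Real.add_one_le_exp (x^2/4)
    linarith
  have hu0 : 0 < Real.exp (x^2/4) := Real.exp_pos _
  have hme : Real.exp (-x^2/2) * (Real.exp (x^2/4) * Real.exp (x^2/4)) = 1 := by
    rw [← Real.exp_add, ← Real.exp_add, show -x^2/2 + (x^2/4 + x^2/4) = 0 by ring,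
      Real.exp_zero]
  have h1 : (1 + x^2/4)^2 ≤ Real.exp (x^2/4) * Real.exp (x^2/4) := by
    nlinarith [sq_nonneg x]
  have hA : Real.exp (-x^2/2) * (1 + x^2/2 + x^4/16) ≤ 1 := by
    nlinarith [mul_le_mul_of_nonneg_left h1 he0.le]
  rw [abs_le]
  constructor <;>
    nlinarith [mul_nonneg he0.le (sq_nonneg x), mul_nonneg he0.le (sq_nonneg (x^2)), he0.le]

lemma g5_bound (x : ℝ) : |g5 x| ≤ 31 * Real.sqrt (2/π) := by
  have hk : 0 ≤ Real.sqrt (2/π) := Real.sqrt_nonneg _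
  have : g5 x = Real.sqrt (2/π) * ((x^4 - 6*x^2 + 3) * Real.exp (-x^2/2)) := by
    unfold g5; ring
  rw [this, abs_mul, abs_of_nonneg hk]
  calc Real.sqrt (2/π) * |(x^4 - 6*x^2 + 3) * Real.exp (-x^2/2)|
      ≤ Real.sqrt (2/π) * 31 := mul_le_mul_of_nonneg_left (gauss_poly_bound x) hk
    _ = 31 * Real.sqrt (2/π) := by ring

lemma step {F F' : ℝ → ℝ} {C : ℝ} {n : ℕ} (hF : ∀ x, HasDerivAt F (F' x) x)
    (hF0 : F 0 = 0) (hC : 0 ≤ C) (hb : ∀ x, 0 ≤ x → |F' x| ≤ C * x ^ n) :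
    ∀ h, 0 ≤ h → |F h| ≤ C * h ^ (n + 1) := by
  intro h hh
  have key := Convex.norm_image_sub_le_of_norm_hasDerivWithin_le
    (f := F) (f' := F') (C := C * h ^ n) (s := Set.Icc 0 h)
    (fun x _ => (hF x).hasDerivWithinAt)
    (fun x hx => by
      rw [Real.norm_eq_abs]
      exact (hb x hx.1).trans (mul_le_mul_of_nonneg_left (pow_le_pow_left₀ hx.1 hx.2 n) hC))
    (convex_Icc 0 h) (Set.left_mem_Icc.mpr hh) (Set.right_mem_Icc.mpr hh)
  rw [hF0, sub_zero, Real.norm_eq_abs, sub_zero, Real.norm_eq_abs, abs_of_nonneg hh] at key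
  calc |F h| ≤ C * h ^ n * h := key
    _ = C * h ^ (n + 1) := by ring

lemma D_bound (Δ h : ℝ) (hh : 0 ≤ h) :
    |g0 (Δ+h) - g0 (Δ-h) - 2*h*g1 Δ - h^3/3 * g3 Δ| ≤ 62 * Real.sqrt (2/π) * h^5 := by
  set C : ℝ := 62 * Real.sqrt (2/π) with hCdef
  have hC : 0 ≤ C := by positivity
  -- step 1 : D4
  have h4 : ∀ x, 0 ≤ x → |g4 (Δ+x) - g4 (Δ-x)| ≤ C * x ^ 1 := by
    refine step (F' := fun t => g5 (Δ+t) + g5 (Δ-t)) ?_ (by simp) hC ?_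
    · intro t
      have H := (comp_add Δ t (hd4 (Δ+t))).sub (comp_sub Δ t (hd4 (Δ-t)))
      have hval : g5 (Δ+t) + g5 (Δ-t) = g5 (Δ+t) - -g5 (Δ-t) := by ring
      simp only [hval]; exact H
    · intro x _
      calc |g5 (Δ+x) + g5 (Δ-x)| ≤ |g5 (Δ+x)| + |g5 (Δ-x)| := abs_add_le _ _
        _ ≤ 31 * Real.sqrt (2/π) + 31 * Real.sqrt (2/π) := add_le_add (g5_bound _) (g5_bound _)
        _ = C * x ^ 0 := by rw [pow_zero, hCdef]; ring
  -- step 2 : D3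
  have h3 : ∀ x, 0 ≤ x → |g3 (Δ+x) + g3 (Δ-x) - 2 * g3 Δ| ≤ C * x ^ 2 := by
    refine step (F' := fun t => g4 (Δ+t) - g4 (Δ-t)) ?_ (by simp; ring) hC h4
    intro t
    have H := ((comp_add Δ t (hd3 (Δ+t))).add (comp_sub Δ t (hd3 (Δ-t)))).sub_const (2 * g3 Δ)
    have hval : g4 (Δ+t) - g4 (Δ-t) = g4 (Δ+t) + -g4 (Δ-t) := by ring
    simp only [hval]; exact H
  -- step 3 : D2
  have h2 : ∀ x, 0 ≤ x → |g2 (Δ+x) - g2 (Δ-x) - 2*x*g3 Δ| ≤ C * x ^ 3 := by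
    refine step (F' := fun t => g3 (Δ+t) + g3 (Δ-t) - 2 * g3 Δ) ?_ (by simp) hC h3
    intro t
    have hlin : HasDerivAt (fun t : ℝ => 2*t*g3 Δ) (2 * g3 Δ) t := by
      have := ((hasDerivAt_id t).const_mul (2:ℝ)).mul_const (g3 Δ)
      simpa using this
    have H := ((comp_add Δ t (hd2 (Δ+t))).sub (comp_sub Δ t (hd2 (Δ-t)))).sub hlin
    have hval : g3 (Δ+t) + g3 (Δ-t) - 2 * g3 Δ
        = g3 (Δ+t) - -g3 (Δ-t) - 2 * g3 Δ := by ring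
    simp only [hval]; exact H
  -- step 4 : D1
  have h1 : ∀ x, 0 ≤ x → |g1 (Δ+x) + g1 (Δ-x) - 2 * g1 Δ - x^2 * g3 Δ| ≤ C * x ^ 4 := by
    refine step (F' := fun t => g2 (Δ+t) - g2 (Δ-t) - 2*t*g3 Δ) ?_ (by simp; ring) hC h2
    intro t
    have hpow : HasDerivAt (fun t : ℝ => t^2 * g3 Δ) (2*t*g3 Δ) t := by
      have := (hasDerivAt_pow 2 t).mul_const (g3 Δ)
      refine this.congr_deriv ?_
      push_cast
      ring
    have H := (((comp_add Δ t (hd1 (Δ+t))).add (comp_sub Δ t (hd1 (Δ-t)))).sub_const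
      (2 * g1 Δ)).sub hpow
    have hval : g2 (Δ+t) - g2 (Δ-t) - 2*t*g3 Δ
        = g2 (Δ+t) + -g2 (Δ-t) - 2*t*g3 Δ := by ring
    simp only [hval]; exact H
  -- step 5 : D
  have h0 : ∀ x, 0 ≤ x → |g0 (Δ+x) - g0 (Δ-x) - 2*x*g1 Δ - x^3/3 * g3 Δ| ≤ C * x ^ 5 := by
    refine step (F' := fun t => g1 (Δ+t) + g1 (Δ-t) - 2 * g1 Δ - t^2 * g3 Δ) ?_ (by simp) hC h1
    intro t
    have hlin : HasDerivAt (fun t : ℝ => 2*t*g1 Δ) (2 * g1 Δ) t := by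
      have := ((hasDerivAt_id t).const_mul (2:ℝ)).mul_const (g1 Δ)
      simpa using this
    have hcub : HasDerivAt (fun t : ℝ => t^3/3 * g3 Δ) (t^2 * g3 Δ) t := by
      have := ((hasDerivAt_pow 3 t).div_const 3).mul_const (g3 Δ)
      refine this.congr_deriv ?_
      push_cast
      ring
    have H := (((comp_add Δ t (hd0 (Δ+t))).sub (comp_sub Δ t (hd0 (Δ-t)))).sub hlin).sub hcub
    have hval : g1 (Δ+t) + g1 (Δ-t) - 2 * g1 Δ - t^2 * g3 Δ
        = g1 (Δ+t) - -g1 (Δ-t) - 2 * g1 Δ - t^2 * g3 Δ := by ring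
    simp only [hval]; exact H
  exact h0 h hh

/-- Large-`s` expansion of `α(Δ, s, 1, ε)` for the clipped linear sigmoid:
`α = (1-2ε)√(2/π) e^{-Δ²/2} (1 + (Δ²-1)/(24 s²) + O(1/s⁴))`, and in particular
`α → (1-2ε)√(2/π) e^{-Δ²/2}` as `s → ∞`. -/
theorem alpha_expansion_s_to_infty (Δ ε : ℝ) (hε : ε ∈ Set.Ico (0 : ℝ) (1 / 2)) :
    let α : ℝ → ℝ := fun s =>
      (1 - 2 * ε) * s *
        (erf ((Δ + 1 / (2 * s)) / Real.sqrt 2) - erf ((Δ - 1 / (2 * s)) / Real.sqrt 2))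
    let A : ℝ := (1 - 2 * ε) * Real.sqrt (2 / π) * Real.exp (-Δ ^ 2 / 2)
    (∃ c : ℝ, ∀ᶠ s in atTop,
        |α s - A * (1 + (Δ ^ 2 - 1) / (24 * s ^ 2))| ≤ c / s ^ 4) ∧
      Tendsto α atTop (nhds A) := by
  intro α A
  set c : ℝ := |1 - 2*ε| * (62 * Real.sqrt (2/π)) / 32 with hc
  have hmain : ∀ᶠ s in atTop, |α s - A * (1 + (Δ ^ 2 - 1) / (24 * s ^ 2))| ≤ c / s ^ 4 := by
    filter_upwards [eventually_ge_atTop (1:ℝ)] with s hs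
    have hs0 : (0:ℝ) < s := by linarith
    have key := D_bound Δ (1/(2*s)) (by positivity)
    have hrfl : α s = (1 - 2*ε) * s *
        (erf ((Δ + 1/(2*s)) / Real.sqrt 2) - erf ((Δ - 1/(2*s)) / Real.sqrt 2)) := rfl
    have hArfl : A = (1 - 2*ε) * Real.sqrt (2/π) * Real.exp (-Δ^2/2) := rfl
    have heq : α s - A * (1 + (Δ ^ 2 - 1) / (24 * s ^ 2)) =
        (1 - 2*ε) * s * (g0 (Δ + 1/(2*s)) - g0 (Δ - 1/(2*s)) - 2*(1/(2*s))*g1 Δ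
          - (1/(2*s))^3/3 * g3 Δ) := by
      rw [hrfl, hArfl]
      simp only [g0, g1, g3]
      field_simp
      ring
    rw [heq, abs_mul, abs_mul, abs_of_pos hs0]
    calc |1 - 2*ε| * s * |g0 (Δ + 1/(2*s)) - g0 (Δ - 1/(2*s)) - 2*(1/(2*s))*g1 Δ
          - (1/(2*s))^3/3 * g3 Δ|
        ≤ |1 - 2*ε| * s * (62 * Real.sqrt (2/π) * (1/(2*s))^5) := by
          gcongr
      _ = c / s ^ 4 := by
          rw [hc]
          field_simp
          ring
  constructor
  · exact ⟨c, hmain⟩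
  · have htend4 : Tendsto (fun s : ℝ => c / s ^ 4) atTop (nhds 0) :=
      tendsto_const_nhds.div_atTop (tendsto_pow_atTop (by norm_num))
    have h2 : Tendsto (fun s => α s - A * (1 + (Δ ^ 2 - 1) / (24 * s ^ 2))) atTop (nhds 0) := by
      apply squeeze_zero_norm' _ htend4
      filter_upwards [hmain] with s hs
      simpa [Real.norm_eq_abs] using hs
    have hinv : Tendsto (fun s : ℝ => (Δ ^ 2 - 1) / (24 * s ^ 2)) atTop (nhds 0) := by
      have h := ((tendsto_pow_atTop (n := 2) (by norm_num)).inv_tendsto_atTop (𝕜 := ℝ)).const_mul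
        ((Δ^2 - 1)/24)
      rw [mul_zero] at h
      refine h.congr fun s => ?_
      simp only [Pi.inv_apply]
      ring
    have h1 : Tendsto (fun s : ℝ => A * (1 + (Δ ^ 2 - 1) / (24 * s ^ 2))) atTop (nhds A) := by
      have := (tendsto_const_nhds (x := (1:ℝ)) (f := atTop)).add hinv
      have h := this.const_mul A
      rw [add_zero, mul_one] at h
      exact h
    have h3 := h2.add h1
    rw [zero_add] at h3
    exact h3.congr fun s => by ring
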